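/- Let P : ℝ^d → ℂ be a polynomial with R = Re P positive-definite (R(ξ) ≥ 0 with equality only at 0) and suppose R(t^E ξ) = t·R(ξ) for all t > 0, ξ, for some diagonalizable E with positive spectrum, all eigenvalues strictly less than 1. Define the Legendre–Fenchel transform R^#(x) = sup_ξ {⟨ξ, x⟩ − R(ξ)}. Then R^# is finite-valued, continuous, R^#(x) ≥ 0 with R^#(x) = 0 only when x = 0, and R^#((t^{I−E})^* x) = t·R^#(x) for all t > 0, i.e., I − E^* ∈ Exp(R^#). -/

import Mathlib

open Matrix

lemma exists_opBound {d : ℕ} (M : Matrix (Fin d) (Fin d) ℝ) :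
    ∃ C : ℝ, 0 < C ∧ ∀ v : Fin d → ℝ, ‖M.mulVec v‖ ≤ C * ‖v‖ := by
  let L : (Fin d → ℝ) →L[ℝ] (Fin d → ℝ) := LinearMap.toContinuousLinearMap (Matrix.mulVecLin M)
  refine ⟨max ‖L‖ 1, lt_of_lt_of_le one_pos (le_max_right _ _), fun v => ?_⟩
  calc ‖M.mulVec v‖ = ‖L v‖ := rfl
    _ ≤ ‖L‖ * ‖v‖ := L.le_opNorm v
    _ ≤ max ‖L‖ 1 * ‖v‖ := mul_le_mul_of_nonneg_right (le_max_left _ _) (norm_nonneg _)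

lemma diag_mulVec_norm_le {d : ℕ} (c : Fin d → ℝ) (a : ℝ) (ha : 0 ≤ a)
    (hc : ∀ i, |c i| ≤ a) (v : Fin d → ℝ) :
    ‖(Matrix.diagonal c).mulVec v‖ ≤ a * ‖v‖ := by
  rw [pi_norm_le_iff_of_nonneg (by positivity)]
  intro i
  rw [Matrix.mulVec_diagonal]
  calc ‖c i * v i‖ = |c i| * ‖v i‖ := by rw [norm_mul]; rfl
    _ ≤ a * ‖v‖ := mul_le_mul (hc i) (norm_le_pi_norm v i) (norm_nonneg _) ha

lemma conj_diag_bound {d : ℕ} (P Q : Matrix (Fin d) (Fin d) ℝ) :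
    ∃ c0 : ℝ, 0 < c0 ∧ ∀ (c : Fin d → ℝ) (a : ℝ), 0 ≤ a → (∀ i, |c i| ≤ a) →
      ∀ v : Fin d → ℝ, ‖(P * Matrix.diagonal c * Q).mulVec v‖ ≤ c0 * a * ‖v‖ := by
  obtain ⟨CP, hCP, hP⟩ := exists_opBound P
  obtain ⟨CQ, hCQ, hQ⟩ := exists_opBound Q
  refine ⟨CP * CQ, by positivity, fun c a ha hc v => ?_⟩
  have h1 : (P * Matrix.diagonal c * Q).mulVec v
      = P.mulVec ((Matrix.diagonal c).mulVec (Q.mulVec v)) := by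
    rw [Matrix.mulVec_mulVec, Matrix.mulVec_mulVec]
  rw [h1]
  calc ‖P.mulVec ((Matrix.diagonal c).mulVec (Q.mulVec v))‖
      ≤ CP * ‖(Matrix.diagonal c).mulVec (Q.mulVec v)‖ := hP _
    _ ≤ CP * (a * ‖Q.mulVec v‖) :=
        mul_le_mul_of_nonneg_left (diag_mulVec_norm_le c a ha hc _) hCP.le
    _ ≤ CP * (a * (CQ * ‖v‖)) :=
        mul_le_mul_of_nonneg_left (mul_le_mul_of_nonneg_left (hQ v) ha) hCP.le
    _ = CP * CQ * a * ‖v‖ := by ring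

noncomputable def Psi {d : ℕ} (B : Matrix (Fin d) (Fin d) ℝ) (D : Fin d → ℝ) (s : ℝ) :
    Matrix (Fin d) (Fin d) ℝ :=
  B * Matrix.diagonal (fun i => Real.exp (s * D i)) * B⁻¹

lemma exp_smul_conj_diag {d : ℕ} {B : Matrix (Fin d) (Fin d) ℝ} (hB : IsUnit B)
    (v : Fin d → ℝ) (s : ℝ) :
    NormedSpace.exp (s • (B * Matrix.diagonal v * B⁻¹))
      = B * Matrix.diagonal (fun i => Real.exp (s * v i)) * B⁻¹ := by
  have h1 : s • (B * Matrix.diagonal v * B⁻¹) = B * Matrix.diagonal (fun i => s * v i) * B⁻¹ := by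
    rw [← Matrix.smul_mul, ← Matrix.mul_smul, ← Matrix.diagonal_smul]
    rfl
  rw [h1, Matrix.exp_conj B _ hB, Matrix.exp_diagonal]
  congr 1
  ext i
  simp [← Real.exp_eq_exp_ℝ]

lemma Psi_mul {d : ℕ} {B : Matrix (Fin d) (Fin d) ℝ} (hB : IsUnit B) (D : Fin d → ℝ) (s u : ℝ) :
    Psi B D s * Psi B D u = Psi B D (s + u) := by
  have hBB : B⁻¹ * B = 1 := Matrix.nonsing_inv_mul B ((Matrix.isUnit_iff_isUnit_det B).mp hB)
  unfold Psi
  rw [show B * Matrix.diagonal (fun i => Real.exp (s * D i)) * B⁻¹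
        * (B * Matrix.diagonal (fun i => Real.exp (u * D i)) * B⁻¹)
      = B * (Matrix.diagonal (fun i => Real.exp (s * D i)) * (B⁻¹ * B)
        * Matrix.diagonal (fun i => Real.exp (u * D i))) * B⁻¹ by noncomm_ring]
  rw [hBB, mul_one, Matrix.diagonal_mul_diagonal]
  have he : (fun i : Fin d => Real.exp (s * D i) * Real.exp (u * D i))
      = fun i => Real.exp ((s + u) * D i) := by
    funext i; rw [← Real.exp_add]; ring_nf
  rw [he]

lemma Psi_zero {d : ℕ} {B : Matrix (Fin d) (Fin d) ℝ} (hB : IsUnit B) (D : Fin d → ℝ) :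
    Psi B D 0 = 1 := by
  unfold Psi
  have : (fun i : Fin d => Real.exp (0 * D i)) = fun _ => 1 := by funext i; simp
  rw [this, Matrix.diagonal_one, mul_one]
  exact Matrix.mul_nonsing_inv B ((Matrix.isUnit_iff_isUnit_det B).mp hB)

lemma Psi_mulVec_Psi {d : ℕ} {B : Matrix (Fin d) (Fin d) ℝ} (hB : IsUnit B) (D : Fin d → ℝ)
    (s u : ℝ) (v : Fin d → ℝ) :
    (Psi B D s).mulVec ((Psi B D u).mulVec v) = (Psi B D (s + u)).mulVec v := by
  rw [Matrix.mulVec_mulVec, Psi_mul hB]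

lemma Psi_cancel {d : ℕ} {B : Matrix (Fin d) (Fin d) ℝ} (hB : IsUnit B) (D : Fin d → ℝ)
    (s : ℝ) (v : Fin d → ℝ) :
    (Psi B D (-s)).mulVec ((Psi B D s).mulVec v) = v := by
  rw [Psi_mulVec_Psi hB, neg_add_cancel, Psi_zero hB, Matrix.one_mulVec]

lemma isLUB_image_mul {t l : ℝ} (ht : 0 < t) {S : Set ℝ} (h : IsLUB S l) :
    IsLUB ((fun y => t * y) '' S) (t * l) := by
  constructor
  · rintro y ⟨z, hz, rfl⟩
    exact mul_le_mul_of_nonneg_left (h.1 hz) ht.le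
  · intro u hu
    have : l ≤ u / t := by
      apply h.2
      intro z hz
      have := hu ⟨z, hz, rfl⟩
      rwa [le_div_iff₀ ht, mul_comm]
    calc t * l ≤ t * (u / t) := mul_le_mul_of_nonneg_left this ht.le
      _ = u := by field_simp

lemma dotProduct_le_norm {d : ℕ} (v w : Fin d → ℝ) :
    v ⬝ᵥ w ≤ (d : ℝ) * ‖v‖ * ‖w‖ := by
  calc v ⬝ᵥ w ≤ |v ⬝ᵥ w| := le_abs_self _
    _ ≤ ∑ i, |v i * w i| := Finset.abs_sum_le_sum_abs _ _
    _ ≤ ∑ _i : Fin d, ‖v‖ * ‖w‖ := by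
        apply Finset.sum_le_sum
        intro i _
        rw [abs_mul]
        exact mul_le_mul (norm_le_pi_norm v i) (norm_le_pi_norm w i) (abs_nonneg _) (norm_nonneg _)
    _ = (d : ℝ) * ‖v‖ * ‖w‖ := by
        rw [Finset.sum_const, Finset.card_univ, Fintype.card_fin]
        ring

set_option maxHeartbeats 2000000 in
/-- Properties of the Legendre–Fenchel transform R^# of the positive-definite real part R of
a polynomial, homogeneous w.r.t. a diagonalizable E with eigenvalues in (0,1): R^# is
finite-valued (an honest supremum), continuous, positive-definite, and I - E^* ∈ Exp(R^#). -/
theorem legendre_fenchel_properties {d : ℕ}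
    (p : MvPolynomial (Fin d) ℂ) (R : (Fin d → ℝ) → ℝ)
    (hR : ∀ ξ : Fin d → ℝ, R ξ = (MvPolynomial.eval (fun i => (ξ i : ℂ)) p).re)
    (hnonneg : ∀ ξ, 0 ≤ R ξ) (hdef : ∀ ξ : Fin d → ℝ, R ξ = 0 ↔ ξ = 0)
    (E B : Matrix (Fin d) (Fin d) ℝ) (D : Fin d → ℝ)
    (hB : IsUnit B) (hD : ∀ i, D i ∈ Set.Ioo (0:ℝ) 1)
    (hdiag : E = B * Matrix.diagonal D * B⁻¹)
    (hhom : ∀ t : ℝ, 0 < t → ∀ ξ : Fin d → ℝ,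
      R ((NormedSpace.exp ((Real.log t) • E)).mulVec ξ) = t * R ξ) :
    ∃ Rs : (Fin d → ℝ) → ℝ,
      (∀ x : Fin d → ℝ, IsLUB {y : ℝ | ∃ ξ : Fin d → ℝ, y = ξ ⬝ᵥ x - R ξ} (Rs x)) ∧
      Continuous Rs ∧
      (∀ x, 0 ≤ Rs x) ∧
      (∀ x : Fin d → ℝ, Rs x = 0 ↔ x = 0) ∧
      (∀ t : ℝ, 0 < t → ∀ x : Fin d → ℝ,
        Rs ((NormedSpace.exp ((Real.log t) • ((1 : Matrix (Fin d) (Fin d) ℝ) - E)))ᵀ.mulVec x)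
          = t * Rs x) := by
  have hR0 : R 0 = 0 := (hdef 0).mpr rfl
  rcases Nat.eq_zero_or_pos d with hd | hd
  · -- degenerate case d = 0
    subst hd
    have hsub : ∀ ξ : Fin 0 → ℝ, ξ = 0 := fun ξ => funext fun i => i.elim0
    have hset : ∀ x : Fin 0 → ℝ, {y : ℝ | ∃ ξ : Fin 0 → ℝ, y = ξ ⬝ᵥ x - R ξ} = {0} := by
      intro x
      ext y
      simp only [Set.mem_setOf_eq, Set.mem_singleton_iff]
      constructor
      · rintro ⟨ξ, rfl⟩
        rw [hsub ξ, hR0]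
        simp [dotProduct]
      · rintro rfl
        exact ⟨0, by rw [hR0]; simp [dotProduct]⟩
    refine ⟨fun _ => 0, fun x => ?_, continuous_const, fun _ => le_refl 0, fun x => ?_, ?_⟩
    · rw [hset x]; exact isLUB_singleton
    · simp [hsub x]
    · intro t ht x; ring
  · -- main case
    haveI : Nonempty (Fin d) := ⟨⟨0, hd⟩⟩
    -- eigenvalue bounds
    obtain ⟨i0, -, hi0⟩ := Finset.exists_min_image Finset.univ D ⟨Classical.arbitrary _, Finset.mem_univ _⟩
    obtain ⟨i1, -, hi1⟩ := Finset.exists_max_image Finset.univ D ⟨Classical.arbitrary _, Finset.mem_univ _⟩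
    set lam := D i0 with hlam_def
    set Lam := D i1 with hLam_def
    have hlam : 0 < lam := (hD i0).1
    have hLam1 : Lam < 1 := (hD i1).2
    have hlamLam : lam ≤ Lam := hi0 i1 (Finset.mem_univ _)
    have h1L : (0:ℝ) < 1 - Lam := by linarith
    have hLam0 : 0 < Lam := lt_of_lt_of_le hlam hlamLam
    have hexp_bound : ∀ (s : ℝ) (i : Fin d),
        Real.exp (s * D i) ≤ max (Real.exp (s * lam)) (Real.exp (s * Lam)) := by
      intro s i
      rcases le_or_gt 0 s with hs | hs
      · exact le_max_of_le_right (Real.exp_le_exp.mpr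
          (mul_le_mul_of_nonneg_left (hi1 i (Finset.mem_univ _)) hs))
      · exact le_max_of_le_left (Real.exp_le_exp.mpr
          (mul_le_mul_of_nonpos_left (hi0 i (Finset.mem_univ _)) hs.le))
    -- norm bounds for Psi
    obtain ⟨c0, hc0, hc0b⟩ := conj_diag_bound B B⁻¹
    obtain ⟨c1, hc1, hc1b⟩ := conj_diag_bound B⁻¹ᵀ Bᵀ
    have hmaxpos : ∀ s : ℝ, 0 ≤ max (Real.exp (s * lam)) (Real.exp (s * Lam)) :=
      fun s => le_max_of_le_left (Real.exp_pos _).le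
    have habs : ∀ (s : ℝ) (i : Fin d),
        |Real.exp (s * D i)| ≤ max (Real.exp (s * lam)) (Real.exp (s * Lam)) := by
      intro s i
      rw [abs_of_pos (Real.exp_pos _)]
      exact hexp_bound s i
    have hPsiB : ∀ (s : ℝ) (v : Fin d → ℝ), ‖(Psi B D s).mulVec v‖
        ≤ c0 * max (Real.exp (s * lam)) (Real.exp (s * Lam)) * ‖v‖ :=
      fun s v => hc0b _ _ (hmaxpos s) (habs s) v
    have hPsiT : ∀ (s : ℝ), (Psi B D s)ᵀ
        = B⁻¹ᵀ * Matrix.diagonal (fun i => Real.exp (s * D i)) * Bᵀ := by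
      intro s
      unfold Psi
      rw [Matrix.transpose_mul, Matrix.transpose_mul, Matrix.diagonal_transpose]
      noncomm_ring
    have hPsiTB : ∀ (s : ℝ) (v : Fin d → ℝ), ‖((Psi B D s)ᵀ).mulVec v‖
        ≤ c1 * max (Real.exp (s * lam)) (Real.exp (s * Lam)) * ‖v‖ := by
      intro s v
      rw [hPsiT s]
      exact hc1b _ _ (hmaxpos s) (habs s) v
    -- homogeneity in Psi form
    have hhomP : ∀ (s : ℝ) (ξ : Fin d → ℝ),
        R ((Psi B D s).mulVec ξ) = Real.exp s * R ξ := by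
      intro s ξ
      have h := hhom (Real.exp s) (Real.exp_pos s) ξ
      rw [Real.log_exp, hdiag, exp_smul_conj_diag hB] at h
      exact h
    -- continuity of R
    have hRc : Continuous R := by
      have : R = fun ξ => (MvPolynomial.eval (fun i => ((ξ i : ℝ) : ℂ)) p).re := funext hR
      rw [this]
      exact Complex.continuous_re.comp ((MvPolynomial.continuous_eval p).comp
        (continuous_pi fun i => Complex.continuous_ofReal.comp (continuous_apply i)))
    -- minimum of R on the unit sphere
    obtain ⟨η0, hη0K, hminK⟩ := (isCompact_sphere (0 : Fin d → ℝ) 1).exists_isMinOn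
      ⟨Pi.single (Classical.arbitrary _) 1, by simp [mem_sphere_zero_iff_norm, Pi.norm_single]⟩
      hRc.continuousOn
    set m := R η0 with hm_def
    have hη0norm : ‖η0‖ = 1 := mem_sphere_zero_iff_norm.mp hη0K
    have hm : 0 < m := by
      rcases (hnonneg η0).lt_or_eq with h | h
      · exact h
      · exfalso
        have : η0 = 0 := (hdef η0).mp h.symm
        rw [this, norm_zero] at hη0norm
        norm_num at hη0norm
    have hmin : ∀ η : Fin d → ℝ, ‖η‖ = 1 → m ≤ R η := by
      intro η hη
      exact hminK (mem_sphere_zero_iff_norm.mpr hη)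
    -- polar decomposition
    have hmax_le : ∀ u : ℝ, u ≤ 0 →
        max (Real.exp (u * lam)) (Real.exp (u * Lam)) = Real.exp (u * lam) :=
      fun u hu => max_eq_left (Real.exp_le_exp.mpr (mul_le_mul_of_nonpos_left hlamLam hu))
    have hmax_ge : ∀ u : ℝ, 0 ≤ u →
        max (Real.exp (u * lam)) (Real.exp (u * Lam)) = Real.exp (u * Lam) :=
      fun u hu => max_eq_right (Real.exp_le_exp.mpr (mul_le_mul_of_nonneg_left hlamLam hu))
    -- lower bound on ‖Psi u ξ‖ for u ≥ 0
    have hlowb : ∀ (u : ℝ) (ξ : Fin d → ℝ), 0 ≤ u →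
        ‖ξ‖ ≤ c0 * Real.exp (-u * lam) * ‖(Psi B D u).mulVec ξ‖ := by
      intro u ξ hu
      calc ‖ξ‖ = ‖(Psi B D (-u)).mulVec ((Psi B D u).mulVec ξ)‖ := by rw [Psi_cancel hB]
        _ ≤ c0 * max (Real.exp (-u * lam)) (Real.exp (-u * Lam))
            * ‖(Psi B D u).mulVec ξ‖ := hPsiB _ _
        _ = c0 * Real.exp (-u * lam) * ‖(Psi B D u).mulVec ξ‖ := by
            rw [hmax_le (-u) (by linarith)]
    have hpolar : ∀ ξ : Fin d → ℝ, ξ ≠ 0 → ∃ s : ℝ, ‖(Psi B D s).mulVec ξ‖ = 1 := by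
      intro ξ hξ
      have hξn : 0 < ‖ξ‖ := norm_pos_iff.mpr hξ
      set g : ℝ → ℝ := fun u => ‖(Psi B D u).mulVec ξ‖ with hg_def
      have hgc : Continuous g := by
        have hrew : (fun u => (Psi B D u).mulVec ξ)
            = fun u => B.mulVec (fun i => Real.exp (u * D i) * (B⁻¹.mulVec ξ) i) := by
          funext u
          show (Psi B D u).mulVec ξ = _
          unfold Psi
          rw [← Matrix.mulVec_mulVec, ← Matrix.mulVec_mulVec]
          have hd2 : (Matrix.diagonal fun i => Real.exp (u * D i)) *ᵥ (B⁻¹ *ᵥ ξ)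
              = fun i => Real.exp (u * D i) * (B⁻¹ *ᵥ ξ) i :=
            funext fun i => Matrix.mulVec_diagonal _ _ _
          rw [hd2]
        have hBc : Continuous fun w : Fin d → ℝ => B.mulVec w :=
          LinearMap.continuous_of_finiteDimensional (Matrix.mulVecLin B)
        have hinner : Continuous fun u : ℝ => (fun i => Real.exp (u * D i) * (B⁻¹.mulVec ξ) i) :=
          continuous_pi fun i =>
            (Real.continuous_exp.comp (continuous_id.mul continuous_const)).mul continuous_const
        have : Continuous fun u => (Psi B D u).mulVec ξ := by
          rw [hrew]; exact hBc.comp hinner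
        exact this.norm
      have hup : ∀ u : ℝ, u ≤ 0 → g u ≤ c0 * Real.exp (u * lam) * ‖ξ‖ := by
        intro u hu
        calc g u ≤ c0 * max (Real.exp (u * lam)) (Real.exp (u * Lam)) * ‖ξ‖ := hPsiB u ξ
          _ = c0 * Real.exp (u * lam) * ‖ξ‖ := by rw [hmax_le u hu]
      set u1 : ℝ := min 0 (Real.log (1 / (c0 * ‖ξ‖)) / lam) with hu1_def
      set u2 : ℝ := max 0 (Real.log (c0 / ‖ξ‖) / lam) with hu2_def
      have hg1 : g u1 ≤ 1 := by
        have h1 : u1 * lam ≤ Real.log (1 / (c0 * ‖ξ‖)) := by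
          rw [← le_div_iff₀ hlam]
          exact min_le_right _ _
        have h2 : Real.exp (u1 * lam) ≤ 1 / (c0 * ‖ξ‖) := by
          calc Real.exp (u1 * lam) ≤ Real.exp (Real.log (1 / (c0 * ‖ξ‖))) :=
              Real.exp_le_exp.mpr h1
            _ = 1 / (c0 * ‖ξ‖) := Real.exp_log (by positivity)
        calc g u1 ≤ c0 * Real.exp (u1 * lam) * ‖ξ‖ := hup u1 (min_le_left _ _)
          _ ≤ c0 * (1 / (c0 * ‖ξ‖)) * ‖ξ‖ := by
              apply mul_le_mul_of_nonneg_right _ (norm_nonneg _)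
              exact mul_le_mul_of_nonneg_left h2 hc0.le
          _ = 1 := by field_simp
      have hg2 : 1 ≤ g u2 := by
        have h1 : Real.log (c0 / ‖ξ‖) ≤ u2 * lam := by
          rw [← div_le_iff₀ hlam]
          exact le_max_right _ _
        have h2 : c0 * Real.exp (-u2 * lam) ≤ ‖ξ‖ := by
          have ha : c0 / ‖ξ‖ ≤ Real.exp (u2 * lam) :=
            (Real.log_le_iff_le_exp (by positivity)).mp h1
          have hb : c0 ≤ ‖ξ‖ * Real.exp (u2 * lam) := by
            rw [div_le_iff₀ hξn] at ha
            linarith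
          calc c0 * Real.exp (-u2 * lam) ≤ (‖ξ‖ * Real.exp (u2 * lam)) * Real.exp (-u2 * lam) :=
              mul_le_mul_of_nonneg_right hb (Real.exp_pos _).le
            _ = ‖ξ‖ := by
                rw [mul_assoc, ← Real.exp_add,
                  show u2 * lam + -u2 * lam = 0 by ring, Real.exp_zero, mul_one]
        have h3 : ‖ξ‖ ≤ c0 * Real.exp (-u2 * lam) * g u2 := hlowb u2 ξ (le_max_left _ _)
        have h4 : ‖ξ‖ ≤ ‖ξ‖ * g u2 := by
          calc ‖ξ‖ ≤ c0 * Real.exp (-u2 * lam) * g u2 := h3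
            _ ≤ ‖ξ‖ * g u2 := mul_le_mul_of_nonneg_right h2 (norm_nonneg _)
        nlinarith
      have hu12 : u1 ≤ u2 := le_trans (min_le_left _ _) (le_max_left _ _)
      obtain ⟨u, -, hu⟩ := intermediate_value_Icc hu12 hgc.continuousOn ⟨hg1, hg2⟩
      exact ⟨u, hu⟩
    -- bounded above
    have hbdd : ∀ x : Fin d → ℝ,
        BddAbove {y : ℝ | ∃ ξ : Fin d → ℝ, y = ξ ⬝ᵥ x - R ξ} := by
      intro x
      set N : ℝ := (d : ℝ) * c0 * ‖x‖ with hN_def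
      have hN : 0 ≤ N := by positivity
      set K : ℝ := N / m + 1 with hK_def
      have hK1 : 1 ≤ K := le_add_of_nonneg_left (by positivity)
      have hK0 : 0 < K := lt_of_lt_of_le one_pos hK1
      have hmK : m * K = N + m := by
        rw [hK_def, mul_add, mul_one, mul_div_cancel₀ _ (ne_of_gt hm)]
      set M : ℝ := max N (N * K ^ (1 / (1 - Lam))) with hM_def
      have hM0 : 0 ≤ M := le_trans hN (le_max_left _ _)
      refine ⟨M, ?_⟩
      rintro y ⟨ξ, rfl⟩
      rcases eq_or_ne ξ 0 with rfl | hξ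
      · rw [hR0]
        simpa using hM0
      · obtain ⟨s, hs⟩ := hpolar ξ hξ
        set η := (Psi B D s).mulVec ξ with hη_def
        have hξeq : ξ = (Psi B D (-s)).mulVec η := (Psi_cancel hB D s ξ).symm
        have hRξ : R ξ = Real.exp (-s) * R η := by
          rw [hξeq]
          exact hhomP (-s) η
        have hmη : m ≤ R η := hmin η hs
        have hRξ' : Real.exp (-s) * m ≤ R ξ := by
          rw [hRξ]
          exact mul_le_mul_of_nonneg_left hmη (Real.exp_pos _).le
        have hdot : ξ ⬝ᵥ x ≤ N * max (Real.exp (-s * lam)) (Real.exp (-s * Lam)) := by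
          calc ξ ⬝ᵥ x ≤ (d : ℝ) * ‖ξ‖ * ‖x‖ := dotProduct_le_norm ξ x
            _ ≤ (d : ℝ) * (c0 * max (Real.exp (-s * lam)) (Real.exp (-s * Lam)) * ‖η‖) * ‖x‖ := by
                apply mul_le_mul_of_nonneg_right _ (norm_nonneg x)
                apply mul_le_mul_of_nonneg_left _ (Nat.cast_nonneg d)
                rw [hξeq]
                exact hPsiB (-s) η
            _ = N * max (Real.exp (-s * lam)) (Real.exp (-s * Lam)) := by
                rw [hs]
                ring
        have hval : ξ ⬝ᵥ x - R ξ
            ≤ N * max (Real.exp (-s * lam)) (Real.exp (-s * Lam)) - Real.exp (-s) * m := by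
          linarith
        rcases le_or_gt 0 (-s) with hσ | hσ
        · -- large direction
          have hmx : max (Real.exp (-s * lam)) (Real.exp (-s * Lam)) = Real.exp (-s * Lam) :=
            hmax_ge (-s) hσ
          rw [hmx] at hval
          have hsplit : Real.exp (-s) = Real.exp (-s * Lam) * Real.exp (-s * (1 - Lam)) := by
            rw [← Real.exp_add]
            ring_nf
          rcases le_or_gt K (Real.exp (-s * (1 - Lam))) with hcase | hcase
          · -- value ≤ 0
            have h1 : N * Real.exp (-s * Lam) ≤ Real.exp (-s) * m := by
              rw [hsplit]
              have h2 : m * K ≤ m * Real.exp (-s * (1 - Lam)) :=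
                mul_le_mul_of_nonneg_left hcase hm.le
              rw [hmK] at h2
              have h6 := mul_le_mul_of_nonneg_left h2 (Real.exp_pos (-s * Lam)).le
              have h7 : 0 ≤ Real.exp (-s * Lam) * m :=
                mul_nonneg (Real.exp_pos _).le hm.le
              nlinarith [h6, h7]
            have : ξ ⬝ᵥ x - R ξ ≤ 0 := by linarith
            linarith [hM0]
          · -- value ≤ N * K ^ (1/(1-Lam))
            have hexpσ : Real.exp (-s) ≤ K ^ (1 / (1 - Lam)) := by
              have h1 : Real.exp (-s) = Real.exp (-s * (1 - Lam)) ^ (1 / (1 - Lam)) := by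
                rw [← Real.exp_mul,
                  show -s * (1 - Lam) * (1 / (1 - Lam)) = -s by
                    rw [mul_one_div, mul_div_assoc, div_self (ne_of_gt h1L), mul_one]]
              rw [h1]
              exact Real.rpow_le_rpow (Real.exp_pos _).le hcase.le
                (one_div_nonneg.mpr h1L.le)
            have hexpΛ : Real.exp (-s * Lam) ≤ Real.exp (-s) := by
              apply Real.exp_le_exp.mpr
              calc -s * Lam ≤ -s * 1 := mul_le_mul_of_nonneg_left hLam1.le hσ
                _ = -s := mul_one _
            have h3 : ξ ⬝ᵥ x - R ξ ≤ N * K ^ (1 / (1 - Lam)) := by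
              have h4 : N * Real.exp (-s * Lam) ≤ N * K ^ (1 / (1 - Lam)) :=
                mul_le_mul_of_nonneg_left (le_trans hexpΛ hexpσ) hN
              have h5 : 0 ≤ Real.exp (-s) * m := mul_nonneg (Real.exp_pos _).le hm.le
              linarith [h4, h5, hval]
            exact le_trans h3 (le_max_right _ _)
        · -- small direction
          have hmx : max (Real.exp (-s * lam)) (Real.exp (-s * Lam)) = Real.exp (-s * lam) :=
            hmax_le (-s) hσ.le
          rw [hmx] at hval
          have h1 : Real.exp (-s * lam) ≤ 1 := by
            rw [show (1 : ℝ) = Real.exp 0 by rw [Real.exp_zero]]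
            exact Real.exp_le_exp.mpr (by nlinarith)
          have h2 : ξ ⬝ᵥ x - R ξ ≤ N := by
            have h5 := mul_le_mul_of_nonneg_left h1 hN
            have h6 : 0 ≤ Real.exp (-s) * m := mul_nonneg (Real.exp_pos _).le hm.le
            have h7 : N * 1 = N := mul_one N
            linarith [h5, h6, hval]
          exact le_trans h2 (le_max_left _ _)
    set S : (Fin d → ℝ) → Set ℝ := fun x => {y : ℝ | ∃ ξ : Fin d → ℝ, y = ξ ⬝ᵥ x - R ξ}
      with hS_def
    have hmem0 : ∀ x, (0 : ℝ) ∈ S x := by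
      intro x
      exact ⟨0, by rw [hR0]; simp⟩
    set Rs : (Fin d → ℝ) → ℝ := fun x => sSup (S x) with hRs_def
    have hlub : ∀ x, IsLUB (S x) (Rs x) := fun x => isLUB_csSup ⟨0, hmem0 x⟩ (hbdd x)
    have hnn : ∀ x, 0 ≤ Rs x := fun x => (hlub x).1 (hmem0 x)
    -- convexity and continuity
    have hconv : ConvexOn ℝ Set.univ Rs := by
      refine ⟨convex_univ, fun x _ y _ a b ha hb hab => ?_⟩
      apply (hlub _).2
      rintro z ⟨ξ, rfl⟩
      have h1 : ξ ⬝ᵥ (a • x + b • y) = a * (ξ ⬝ᵥ x) + b * (ξ ⬝ᵥ y) := by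
        simp [dotProduct_add, dotProduct_smul, smul_eq_mul]
      have h2 : ξ ⬝ᵥ x - R ξ ≤ Rs x := (hlub x).1 ⟨ξ, rfl⟩
      have h3 : ξ ⬝ᵥ y - R ξ ≤ Rs y := (hlub y).1 ⟨ξ, rfl⟩
      have h5 := add_le_add (mul_le_mul_of_nonneg_left h2 ha) (mul_le_mul_of_nonneg_left h3 hb)
      have h4 : a * R ξ + b * R ξ = R ξ := by rw [← add_mul, hab, one_mul]
      rw [h1]
      simp only [smul_eq_mul]
      nlinarith [h5, h4]
    have hcont : Continuous Rs := by
      rw [← continuousOn_univ]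
      exact hconv.continuousOn isOpen_univ
    -- definiteness
    have hdefRs : ∀ x : Fin d → ℝ, Rs x = 0 ↔ x = 0 := by
      intro x
      constructor
      · intro hx0
        have hub : ∀ ξ : Fin d → ℝ, ξ ⬝ᵥ x ≤ R ξ := by
          intro ξ
          have h := (hlub x).1 ⟨ξ, rfl⟩
          rw [hx0] at h
          linarith
        set C : ℝ := ∑ j : Fin d, (R (Pi.single j 1) + R (-Pi.single j 1)) with hC_def
        have hC0 : 0 ≤ C :=
          Finset.sum_nonneg fun j _ => add_nonneg (hnonneg _) (hnonneg _)
        have hterm : ∀ j : Fin d, R (Pi.single j 1) + R (-Pi.single j 1) ≤ C :=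
          fun j => Finset.single_le_sum
            (f := fun i : Fin d => R (Pi.single i 1) + R (-Pi.single i 1))
            (fun i _ => add_nonneg (hnonneg _) (hnonneg _)) (Finset.mem_univ j)
        have hcoord : ∀ (s : ℝ) (j : Fin d), |((Psi B D s)ᵀ.mulVec x) j| ≤ Real.exp s * C := by
          intro s j
          have hrep : ((Psi B D s)ᵀ.mulVec x) j = ((Psi B D s).mulVec (Pi.single j 1)) ⬝ᵥ x := by
            rw [Matrix.mulVec_single]
            simp [Matrix.mulVec, dotProduct, Matrix.transpose_apply, mul_comm]
          have h1 : ((Psi B D s).mulVec (Pi.single j 1)) ⬝ᵥ x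
              ≤ Real.exp s * R (Pi.single j 1) := by
            rw [← hhomP s]
            exact hub _
          have h2 : -(((Psi B D s).mulVec (Pi.single j 1)) ⬝ᵥ x)
              ≤ Real.exp s * R (-Pi.single j 1) := by
            have h3 : ((Psi B D s).mulVec (-Pi.single j 1)) ⬝ᵥ x
                ≤ Real.exp s * R (-Pi.single j 1) := by
              rw [← hhomP s]
              exact hub _
            rwa [Matrix.mulVec_neg, neg_dotProduct] at h3
          rw [hrep]
          rw [abs_le]
          constructor
          · have h4 : R (-Pi.single j 1) ≤ C :=
              le_trans (le_add_of_nonneg_left (hnonneg _)) (hterm j)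
            have h5 := mul_le_mul_of_nonneg_left h4 (Real.exp_pos s).le
            linarith
          · have h4 : R (Pi.single j 1) ≤ C :=
              le_trans (le_add_of_nonneg_right (hnonneg _)) (hterm j)
            have h5 := mul_le_mul_of_nonneg_left h4 (Real.exp_pos s).le
            linarith
        have hnormb : ∀ s : ℝ, ‖(Psi B D s)ᵀ.mulVec x‖ ≤ Real.exp s * C := by
          intro s
          rw [pi_norm_le_iff_of_nonneg (by positivity)]
          intro j
          rw [Real.norm_eq_abs]
          exact hcoord s j
        have hxb : ∀ s : ℝ, s ≤ 0 → ‖x‖ ≤ c1 * C * Real.exp (s * (1 - Lam)) := by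
          intro s hs
          have hxeq : x = (Psi B D (-s))ᵀ.mulVec ((Psi B D s)ᵀ.mulVec x) := by
            rw [Matrix.mulVec_mulVec, ← Matrix.transpose_mul, Psi_mul hB,
              show s + -s = 0 by ring, Psi_zero hB, Matrix.transpose_one, Matrix.one_mulVec]
          have hmx : max (Real.exp (-s * lam)) (Real.exp (-s * Lam)) = Real.exp (-s * Lam) :=
            hmax_ge (-s) (by linarith)
          calc ‖x‖ = ‖(Psi B D (-s))ᵀ.mulVec ((Psi B D s)ᵀ.mulVec x)‖ := by rw [← hxeq]
            _ ≤ c1 * max (Real.exp (-s * lam)) (Real.exp (-s * Lam))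
                * ‖(Psi B D s)ᵀ.mulVec x‖ := hPsiTB _ _
            _ ≤ c1 * Real.exp (-s * Lam) * (Real.exp s * C) := by
                rw [hmx]
                exact mul_le_mul_of_nonneg_left (hnormb s) (by positivity)
            _ = c1 * C * Real.exp (s * (1 - Lam)) := by
                rw [mul_assoc, mul_assoc, ← mul_assoc (Real.exp (-s * Lam)), ← Real.exp_add,
                  show -s * Lam + s = s * (1 - Lam) by ring]
                ring
        have hlim : Filter.Tendsto (fun s : ℝ => c1 * C * Real.exp (s * (1 - Lam)))
            Filter.atBot (nhds 0) := by
          have h1 : Filter.Tendsto (fun s : ℝ => s * (1 - Lam)) Filter.atBot Filter.atBot := by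
            apply Filter.tendsto_atBot_atBot.mpr
            intro b
            refine ⟨b / (1 - Lam), fun s hs => ?_⟩
            rw [le_div_iff₀ h1L] at hs
            linarith
          have h2 := Real.tendsto_exp_atBot.comp h1
          have h3 := h2.const_mul (c1 * C)
          simpa using h3
        have hx0' : ‖x‖ ≤ 0 := by
          apply ge_of_tendsto hlim
          filter_upwards [Filter.eventually_le_atBot (0:ℝ)] with s hs
          exact hxb s hs
        exact norm_le_zero_iff.mp hx0'
      · rintro rfl
        refine le_antisymm ((hlub 0).2 ?_) (hnn 0)
        rintro y ⟨ξ, rfl⟩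
        simp only [dotProduct_zero]
        linarith [hnonneg ξ]
    -- scaling
    have hdet : IsUnit B.det := (Matrix.isUnit_iff_isUnit_det B).mp hB
    have hscale : ∀ t : ℝ, 0 < t → ∀ x : Fin d → ℝ,
        Rs ((NormedSpace.exp ((Real.log t) • ((1 : Matrix (Fin d) (Fin d) ℝ) - E)))ᵀ.mulVec x)
          = t * Rs x := by
      intro t ht x
      have hE1 : (1 : Matrix (Fin d) (Fin d) ℝ) - E
          = B * Matrix.diagonal (fun i => 1 - D i) * B⁻¹ := by
        have hd1 : Matrix.diagonal (fun i : Fin d => 1 - D i)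
            = 1 - Matrix.diagonal D := by
          rw [← Matrix.diagonal_one, ← Matrix.diagonal_sub]
        rw [hdiag, hd1, Matrix.mul_sub, Matrix.mul_one, Matrix.sub_mul,
          Matrix.mul_nonsing_inv _ hdet]
      have hA : NormedSpace.exp ((Real.log t) • ((1 : Matrix (Fin d) (Fin d) ℝ) - E))
          = t • Psi B D (-(Real.log t)) := by
        rw [hE1, exp_smul_conj_diag hB]
        show B * Matrix.diagonal (fun i => Real.exp (Real.log t * (1 - D i))) * B⁻¹
          = t • (B * Matrix.diagonal (fun i => Real.exp (-(Real.log t) * D i)) * B⁻¹)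
        rw [← Matrix.smul_mul, ← Matrix.mul_smul, ← Matrix.diagonal_smul]
        have hfun : (fun i : Fin d => Real.exp (Real.log t * (1 - D i)))
            = t • fun i => Real.exp (-(Real.log t) * D i) := by
          funext i
          rw [Pi.smul_apply, smul_eq_mul,
            show Real.log t * (1 - D i) = Real.log t + -(Real.log t) * D i by ring,
            Real.exp_add, Real.exp_log ht]
        rw [hfun]
      set A := NormedSpace.exp ((Real.log t) • ((1 : Matrix (Fin d) (Fin d) ℝ) - E)) with hA_def
      have hdotA : ∀ ξ : Fin d → ℝ, ξ ⬝ᵥ (Aᵀ.mulVec x)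
          = t * ((Psi B D (-(Real.log t))).mulVec ξ ⬝ᵥ x) := by
        intro ξ
        rw [Matrix.dotProduct_mulVec, Matrix.vecMul_transpose, hA,
          Matrix.smul_mulVec, smul_dotProduct]
        rfl
      have hRsub : ∀ ξ : Fin d → ℝ,
          R ξ = t * R ((Psi B D (-(Real.log t))).mulVec ξ) := by
        intro ξ
        conv_lhs => rw [show ξ = (Psi B D (Real.log t)).mulVec
          ((Psi B D (-(Real.log t))).mulVec ξ) by
            rw [Psi_mulVec_Psi hB, show Real.log t + -(Real.log t) = 0 by ring,
              Psi_zero hB, Matrix.one_mulVec]]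
        rw [hhomP, Real.exp_log ht]
      have hseteq : S (Aᵀ.mulVec x) = (fun y => t * y) '' (S x) := by
        ext y
        simp only [hS_def, Set.mem_setOf_eq, Set.mem_image]
        constructor
        · rintro ⟨ξ, rfl⟩
          refine ⟨(Psi B D (-(Real.log t))).mulVec ξ ⬝ᵥ x
            - R ((Psi B D (-(Real.log t))).mulVec ξ), ⟨_, rfl⟩, ?_⟩
          rw [hdotA ξ, hRsub ξ]
          ring
        · rintro ⟨z, ⟨η, rfl⟩, rfl⟩
          refine ⟨(Psi B D (Real.log t)).mulVec η, ?_⟩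
          have hcan : (Psi B D (-(Real.log t))).mulVec
              ((Psi B D (Real.log t)).mulVec η) = η := Psi_cancel hB D _ η
          rw [hdotA, hRsub ((Psi B D (Real.log t)).mulVec η), hcan]
          ring
      have hlub2 : IsLUB (S (Aᵀ.mulVec x)) (t * Rs x) := by
        rw [hseteq]
        exact isLUB_image_mul ht (hlub x)
      exact (hlub (Aᵀ.mulVec x)).unique hlub2
    exact ⟨Rs, hlub, hcont, hnn, hdefRs, hscale⟩
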